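/- Let s : ℝ → ℝ be a nonzero odd polynomial of degree at least two, let h(x,y) = (y, −x + s(y)), and let R > 0 be such that |s(y)| > 2|y| for all real y with |y| ≥ R. Define D = {(x,y) ∈ ℝ² : |y| ≥ |x| ≥ R} and T = {(x,y) ∈ ℝ² : |x| < R ≤ |y|}. Then for every (x,y) ∈ D ∪ T one has h(x,y) ∈ D and max(|x'|,|y'|) > max(|x|,|y|) where (x',y') = h(x,y). -/
import Mathlib


/-- Let `s` be a nonzero odd real polynomial of degree at least two, `h(x,y) = (y, −x + s(y))`,
and `R > 0` with `|s(y)| > 2|y|` whenever `|y| ≥ R`.  For `D = {(x,y) : |y| ≥ |x| ≥ R}` and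
`T = {(x,y) : |x| < R ≤ |y|}`, every point of `D ∪ T` is mapped into `D` by `h`, and its
sup-norm strictly increases. -/
theorem henon_filtration (s : Polynomial ℝ) (hs : s ≠ 0)
    (hodd : ∀ t : ℝ, s.eval (-t) = -s.eval t) (hdeg : 2 ≤ s.natDegree)
    (R : ℝ) (hR : 0 < R) (hRs : ∀ y : ℝ, R ≤ |y| → 2 * |y| < |s.eval y|)
    (x y : ℝ)
    (hmem : (R ≤ |x| ∧ |x| ≤ |y|) ∨ (|x| < R ∧ R ≤ |y|)) :
    (R ≤ |y| ∧ |y| ≤ |-x + s.eval y|) ∧ max |x| |y| < max |y| |-x + s.eval y| := by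
  have hxy : |x| ≤ |y| ∧ R ≤ |y| := by
    rcases hmem with ⟨h1, h2⟩ | ⟨h1, h2⟩
    · exact ⟨h2, le_trans h1 h2⟩
    · exact ⟨le_trans h1.le h2, h2⟩
  obtain ⟨hxy, hRy⟩ := hxy
  have hsy := hRs y hRy
  have key : |y| < |-x + s.eval y| := by
    have : |s.eval y| - |x| ≤ |-x + s.eval y| := by
      have := abs_sub_abs_le_abs_sub (s.eval y) x
      rw [abs_sub_comm] at this
      calc |s.eval y| - |x| ≤ |x - s.eval y| := this
        _ = |-x + s.eval y| := by rw [← abs_neg]; ring_nf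
    nlinarith
  refine ⟨⟨hRy, key.le⟩, ?_⟩
  rw [max_eq_right hxy]
  exact lt_max_of_lt_right key
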